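/- Let G be a finite graph that is a disjoint union of co-interval graphs, and let x, y be two distinct non-adjacent vertices of G lying in the same connected component of G. Then the graph obtained from G by identifying x and y is a disjoint union of co-interval graphs. -/

import Mathlib

universe u

/-- A graph is an interval graph if its vertices can be assigned nonempty closed
intervals of `ℝ` so that distinct vertices are adjacent iff their intervals meet. -/
def IsIntervalGraph {V : Type*} (G : SimpleGraph V) : Prop :=
  ∃ I : V → Set ℝ,
    (∀ v, ∃ a b : ℝ, a ≤ b ∧ I v = Set.Icc a b) ∧
    ∀ u v : V, u ≠ v → (G.Adj u v ↔ (I u ∩ I v).Nonempty)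

/-- A co-interval graph is the complement of an interval graph. -/
def IsCoIntervalGraph {V : Type*} (G : SimpleGraph V) : Prop :=
  IsIntervalGraph Gᶜ

/-- `G` is a vertex-disjoint union of co-interval graphs: its vertex set can be
partitioned (here via the fibers of a map `c`) so that every edge joins two vertices of
the same part and the restriction to each part is a co-interval graph. -/
def IsUnionCoIntervalGraph {V : Type u} (G : SimpleGraph V) : Prop :=
  ∃ (ι : Type u) (c : V → ι),
    (∀ u v : V, G.Adj u v → c u = c v) ∧
    ∀ i : ι, IsCoIntervalGraph (G.induce {v | c v = i})

/-- The graph obtained from `G` by identifying the vertex `y` with the vertex `x`: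
its vertex set is `V(G) \ {y}`; two vertices distinct from `x` are adjacent iff they
are adjacent in `G`, and `x` is adjacent to a vertex `w` iff `x` or `y` is adjacent
to `w` in `G`. (This matches the intended description when `x ≠ y` are non-adjacent.) -/
def identifyGraph {V : Type*} (G : SimpleGraph V) (x y : V) :
    SimpleGraph {v : V // v ≠ y} where
  Adj u w := u ≠ w ∧ (G.Adj u.1 w.1 ∨ (u.1 = x ∧ G.Adj y w.1) ∨ (w.1 = x ∧ G.Adj u.1 y))
  symm := by
    constructor
    rintro u w ⟨hne, h⟩
    refine ⟨hne.symm, ?_⟩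
    rcases h with h | ⟨hu, h⟩ | ⟨hw, h⟩
    · exact Or.inl h.symm
    · exact Or.inr (Or.inr ⟨hu, h.symm⟩)
    · exact Or.inr (Or.inl ⟨hw, h.symm⟩)
  loopless := ⟨fun u h => h.1 rfl⟩

lemma icc_inter_aux {a b c d e f : ℝ} (hab : a ≤ b) (hcd : c ≤ d) (hef : e ≤ f)
    (h : (Set.Icc a b ∩ Set.Icc c d).Nonempty) :
    ((Set.Icc a b ∩ Set.Icc c d) ∩ Set.Icc e f).Nonempty ↔
      (Set.Icc a b ∩ Set.Icc e f).Nonempty ∧ (Set.Icc c d ∩ Set.Icc e f).Nonempty := by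
  simp only [Set.Icc_inter_Icc, Set.nonempty_Icc, sup_le_iff, le_inf_iff] at *
  constructor
  · tauto
  · tauto

/-- Identifying two distinct non-adjacent vertices lying in the same
connected component of a vertex-disjoint union of co-interval graphs yields a
vertex-disjoint union of co-interval graphs. -/
theorem stmt_5 {V : Type u} [Fintype V] (G : SimpleGraph V) (x y : V)
    (hxy : x ≠ y) (hadj : ¬ G.Adj x y) (hreach : G.Reachable x y)
    (hG : IsUnionCoIntervalGraph G) :
    IsUnionCoIntervalGraph (identifyGraph G x y) := by
  obtain ⟨ι, c, hc, hpart⟩ := hG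
  have hwalk : ∀ {a b : V}, G.Walk a b → c a = c b := by
    intro a b p
    induction p with
    | nil => rfl
    | cons h p ih => exact (hc _ _ h).trans ih
  have hcxy : c x = c y := hreach.elim fun p => hwalk p
  refine ⟨ι, fun v => c v.1, ?_, ?_⟩
  · rintro u w ⟨hne, h | ⟨hu, h⟩ | ⟨hw, h⟩⟩
    · exact hc _ _ h
    · show c u.1 = c w.1; rw [hu, hcxy]; exact hc _ _ h
    · show c u.1 = c w.1; rw [hw, hcxy]; exact hc _ _ h
  · intro i
    classical
    obtain ⟨I, hI1, hI2⟩ := hpart i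
    -- vertices of the new induced graph
    set S : Set {v : V // v ≠ y} := {v | c v.1 = i} with hS
    have hkey : ∀ (hx : c x = i) (hy : c y = i),
        (I ⟨x, hx⟩ ∩ I ⟨y, hy⟩).Nonempty := by
      intro hx hy
      refine (hI2 ⟨x, hx⟩ ⟨y, hy⟩ (fun hcontr => hxy (congrArg Subtype.val hcontr))).mp ?_
      exact ⟨fun hcontr => hxy (congrArg Subtype.val hcontr), hadj⟩
    refine ⟨fun v => if h : v.1.1 = x then
        I ⟨x, show c x = i by rw [← h]; exact v.2⟩ ∩ I ⟨y, show c y = i by rw [← hcxy, ← h]; exact v.2⟩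
      else I ⟨v.1.1, v.2⟩, ?_, ?_⟩
    · intro v
      beta_reduce
      by_cases h : v.1.1 = x
      · rw [dif_pos h]
        have hx : c x = i := by rw [← h]; exact v.2
        have hy : c y = i := by rw [← hcxy]; exact hx
        obtain ⟨a, b, hab, hA⟩ := hI1 ⟨x, hx⟩
        obtain ⟨cc, d, hcd, hB⟩ := hI1 ⟨y, hy⟩
        have hne : (I ⟨x, hx⟩ ∩ I ⟨y, hy⟩).Nonempty := hkey hx hy
        rw [hA, hB, Set.Icc_inter_Icc] at hne ⊢
        exact ⟨a ⊔ cc, b ⊓ d, Set.nonempty_Icc.mp hne, rfl⟩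
      · rw [dif_neg h]
        exact hI1 _
    · intro u w huw
      beta_reduce
      have hne1 : u.1.1 ≠ w.1.1 := fun h => huw (Subtype.ext (Subtype.ext h))
      have hLHS : (((identifyGraph G x y).induce S)ᶜ).Adj u w ↔
          ¬ (G.Adj u.1.1 w.1.1 ∨ (u.1.1 = x ∧ G.Adj y w.1.1) ∨
             (w.1.1 = x ∧ G.Adj u.1.1 y)) := by
        constructor
        · rintro ⟨-, hn⟩ hor
          exact hn ⟨fun h => hne1 (Subtype.mk_eq_mk.mp h), hor⟩
        · intro hn
          exact ⟨huw, fun hadj' => hn hadj'.2⟩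
      rw [hLHS]
      by_cases hux : u.1.1 = x
      · have hwx : w.1.1 ≠ x := fun h => hne1 (hux.trans h.symm)
        have hxi : c x = i := by rw [← hux]; exact u.2
        have hyi : c y = i := by rw [← hcxy]; exact hxi
        have hxw : (⟨x, hxi⟩ : {v // c v = i}) ≠ ⟨w.1.1, w.2⟩ :=
          fun h => hwx (congrArg Subtype.val h).symm
        have hyw : (⟨y, hyi⟩ : {v // c v = i}) ≠ ⟨w.1.1, w.2⟩ :=
          fun h => w.1.2 (congrArg Subtype.val h).symm
        have h1 : ¬ G.Adj x w.1.1 ↔ (I ⟨x, hxi⟩ ∩ I ⟨w.1.1, w.2⟩).Nonempty := by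
          rw [← hI2 _ _ hxw]
          exact ⟨fun hn => ⟨hxw, hn⟩, fun h => h.2⟩
        have h2 : ¬ G.Adj y w.1.1 ↔ (I ⟨y, hyi⟩ ∩ I ⟨w.1.1, w.2⟩).Nonempty := by
          rw [← hI2 _ _ hyw]
          exact ⟨fun hn => ⟨hyw, hn⟩, fun h => h.2⟩
        have hJu : (if h : u.1.1 = x then
            I ⟨x, show c x = i by rw [← h]; exact u.2⟩ ∩ I ⟨y, show c y = i by rw [← hcxy, ← h]; exact u.2⟩
          else I ⟨u.1.1, u.2⟩) = I ⟨x, hxi⟩ ∩ I ⟨y, hyi⟩ := by rw [dif_pos hux]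
        have hJw : (if h : w.1.1 = x then
            I ⟨x, show c x = i by rw [← h]; exact w.2⟩ ∩ I ⟨y, show c y = i by rw [← hcxy, ← h]; exact w.2⟩
          else I ⟨w.1.1, w.2⟩) = I ⟨w.1.1, w.2⟩ := by rw [dif_neg hwx]
        rw [hJu, hJw]
        obtain ⟨a, b, hab, hA⟩ := hI1 ⟨x, hxi⟩
        obtain ⟨cc, d, hcd, hB⟩ := hI1 ⟨y, hyi⟩
        obtain ⟨e, f, hef, hC⟩ := hI1 ⟨w.1.1, w.2⟩
        have hnptr : (I ⟨x, hxi⟩ ∩ I ⟨y, hyi⟩).Nonempty := hkey hxi hyi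
        rw [hA] at h1 hnptr ⊢
        rw [hB] at h2 hnptr ⊢
        rw [hC] at h1 h2 ⊢
        rw [icc_inter_aux hab hcd hef hnptr, ← h1, ← h2]
        constructor
        · intro hn
          refine ⟨fun h => hn (Or.inl (hux ▸ h)), fun h => hn (Or.inr (Or.inl ⟨hux, h⟩))⟩
        · rintro ⟨hn1, hn2⟩ (h | ⟨-, h⟩ | ⟨h, -⟩)
          · exact hn1 (hux ▸ h)
          · exact hn2 h
          · exact hwx h
      · by_cases hwx : w.1.1 = x
        · have hxi : c x = i := by rw [← hwx]; exact w.2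
          have hyi : c y = i := by rw [← hcxy]; exact hxi
          have hxu : (⟨x, hxi⟩ : {v // c v = i}) ≠ ⟨u.1.1, u.2⟩ :=
            fun h => hux (congrArg Subtype.val h).symm
          have hyu : (⟨y, hyi⟩ : {v // c v = i}) ≠ ⟨u.1.1, u.2⟩ :=
            fun h => u.1.2 (congrArg Subtype.val h).symm
          have h1 : ¬ G.Adj x u.1.1 ↔ (I ⟨x, hxi⟩ ∩ I ⟨u.1.1, u.2⟩).Nonempty := by
            rw [← hI2 _ _ hxu]
            exact ⟨fun hn => ⟨hxu, hn⟩, fun h => h.2⟩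
          have h2 : ¬ G.Adj y u.1.1 ↔ (I ⟨y, hyi⟩ ∩ I ⟨u.1.1, u.2⟩).Nonempty := by
            rw [← hI2 _ _ hyu]
            exact ⟨fun hn => ⟨hyu, hn⟩, fun h => h.2⟩
          have hJw : (if h : w.1.1 = x then
              I ⟨x, show c x = i by rw [← h]; exact w.2⟩ ∩ I ⟨y, show c y = i by rw [← hcxy, ← h]; exact w.2⟩
            else I ⟨w.1.1, w.2⟩) = I ⟨x, hxi⟩ ∩ I ⟨y, hyi⟩ := by rw [dif_pos hwx]
          have hJu : (if h : u.1.1 = x then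
              I ⟨x, show c x = i by rw [← h]; exact u.2⟩ ∩ I ⟨y, show c y = i by rw [← hcxy, ← h]; exact u.2⟩
            else I ⟨u.1.1, u.2⟩) = I ⟨u.1.1, u.2⟩ := by rw [dif_neg hux]
          rw [hJu, hJw, Set.inter_comm]
          obtain ⟨a, b, hab, hA⟩ := hI1 ⟨x, hxi⟩
          obtain ⟨cc, d, hcd, hB⟩ := hI1 ⟨y, hyi⟩
          obtain ⟨e, f, hef, hC⟩ := hI1 ⟨u.1.1, u.2⟩
          have hnptr : (I ⟨x, hxi⟩ ∩ I ⟨y, hyi⟩).Nonempty := hkey hxi hyi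
          rw [hA] at h1 hnptr ⊢
          rw [hB] at h2 hnptr ⊢
          rw [hC] at h1 h2 ⊢
          rw [icc_inter_aux hab hcd hef hnptr, ← h1, ← h2]
          constructor
          · intro hn
            refine ⟨fun h => hn (Or.inl (hwx ▸ h.symm)),
              fun h => hn (Or.inr (Or.inr ⟨hwx, h.symm⟩))⟩
          · rintro ⟨hn1, hn2⟩ (h | ⟨h, -⟩ | ⟨-, h⟩)
            · exact hn1 (hwx ▸ h.symm)
            · exact hux h
            · exact hn2 h.symm
        · have hJu : (if h : u.1.1 = x then
              I ⟨x, show c x = i by rw [← h]; exact u.2⟩ ∩ I ⟨y, show c y = i by rw [← hcxy, ← h]; exact u.2⟩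
            else I ⟨u.1.1, u.2⟩) = I ⟨u.1.1, u.2⟩ := by rw [dif_neg hux]
          have hJw : (if h : w.1.1 = x then
              I ⟨x, show c x = i by rw [← h]; exact w.2⟩ ∩ I ⟨y, show c y = i by rw [← hcxy, ← h]; exact w.2⟩
            else I ⟨w.1.1, w.2⟩) = I ⟨w.1.1, w.2⟩ := by rw [dif_neg hwx]
          rw [hJu, hJw]
          have huw' : (⟨u.1.1, u.2⟩ : {v // c v = i}) ≠ ⟨w.1.1, w.2⟩ :=
            fun h => hne1 (Subtype.mk_eq_mk.mp h)
          rw [← hI2 _ _ huw']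
          constructor
          · intro hn
            exact ⟨huw', fun h => hn (Or.inl h)⟩
          · rintro ⟨-, hn⟩ (h | ⟨h, -⟩ | ⟨h, -⟩)
            · exact hn h
            · exact hux h
            · exact hwx h
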